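/- Every convex quadrilateral in ℝ² is affinely equivalent to the convex hull Δ'_{(a,b)} of (0,0), (1,0), (a,b), (0,1) for a unique pair (a,b) with a > 0, b > 0, b ≤ 1 ≤ a, and a + b ≥ 2. -/

import Mathlib

/-- The normal-form quadrilateral: the convex hull of (0,0), (1,0), (a,b), (0,1). -/
noncomputable def normalForm (a b : ℝ) : Set (ℝ × ℝ) :=
  convexHull ℝ {((0:ℝ), (0:ℝ)), (1, 0), (a, b), (0, 1)}


noncomputable def straighten (u w : ℝ × ℝ) (h : u.1 * w.2 - u.2 * w.1 ≠ 0) :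
    (ℝ × ℝ) ≃ₗ[ℝ] (ℝ × ℝ) where
  toFun z := ((z.1 * w.2 - z.2 * w.1) / (u.1 * w.2 - u.2 * w.1),
              (u.1 * z.2 - u.2 * z.1) / (u.1 * w.2 - u.2 * w.1))
  map_add' x y := by ext <;> simp <;> ring
  map_smul' c x := by ext <;> simp <;> ring
  invFun p := p.1 • u + p.2 • w
  left_inv z := by
    ext
    · simp only [Prod.fst_add, Prod.smul_fst, smul_eq_mul]
      field_simp [show w.2 * u.1 - w.1 * u.2 ≠ 0 by contrapose! h; linarith]
      ring
    · simp only [Prod.snd_add, Prod.smul_snd, smul_eq_mul]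
      field_simp [show w.2 * u.1 - w.1 * u.2 ≠ 0 by contrapose! h; linarith]
      ring
  right_inv p := by
    ext
    · simp only [Prod.fst_add, Prod.smul_fst, smul_eq_mul, Prod.snd_add, Prod.smul_snd]
      field_simp [show u.1 * w.2 - w.1 * u.2 ≠ 0 by contrapose! h; linarith]
      ring
    · simp only [Prod.snd_add, Prod.smul_snd, smul_eq_mul, Prod.fst_add, Prod.smul_fst]
      field_simp [show w.2 * u.1 - w.1 * u.2 ≠ 0 by contrapose! h; linarith]
      ring

theorem straighten_fst (u w : ℝ × ℝ) (h : u.1 * w.2 - u.2 * w.1 ≠ 0) :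
    straighten u w h u = (1, 0) := by
  have h1 : (u.1 * w.2 - u.2 * w.1) / (u.1 * w.2 - u.2 * w.1) = 1 := div_self h
  have h2 : (u.1 * u.2 - u.2 * u.1) = 0 := by ring
  simp only [straighten, LinearEquiv.coe_mk]
  exact Prod.ext h1 (by show (u.1 * u.2 - u.2 * u.1) / (u.1 * w.2 - u.2 * w.1) = 0; rw [h2, zero_div])

theorem straighten_snd (u w : ℝ × ℝ) (h : u.1 * w.2 - u.2 * w.1 ≠ 0) :
    straighten u w h w = (0, 1) := by
  have h1 : (w.1 * w.2 - w.2 * w.1) = 0 := by ring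
  have h2 : (u.1 * w.2 - u.2 * w.1) / (u.1 * w.2 - u.2 * w.1) = 1 := div_self h
  simp only [straighten, LinearEquiv.coe_mk]
  exact Prod.ext (by show (w.1 * w.2 - w.2 * w.1) / (u.1 * w.2 - u.2 * w.1) = 0; rw [h1, zero_div]) h2

open Set

theorem smul_rep {u w : ℝ × ℝ} (hc : u.1 * w.2 - u.2 * w.1 = 0) (hu0 : u ≠ 0) :
    ∃ t : ℝ, w = t • u := by
  by_cases h1 : u.1 ≠ 0
  · refine ⟨w.1 / u.1, ?_⟩
    have hw2 : w.1 / u.1 * u.2 = w.2 := by field_simp; nlinarith [hc]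
    ext
    · simp only [Prod.smul_fst, smul_eq_mul]; field_simp
    · simp only [Prod.smul_snd, smul_eq_mul]; rw [hw2]
  · push_neg at h1
    have h2 : u.2 ≠ 0 := fun h2 => hu0 (by ext <;> simp [h1, h2])
    refine ⟨w.2 / u.2, ?_⟩
    have hw1 : w.2 / u.2 * u.1 = w.1 := by
      rw [h1] at hc
      have h3 : u.2 * w.1 = 0 := by linarith
      have h4 : w.1 = 0 := (mul_eq_zero.1 h3).resolve_left h2
      rw [h1, mul_zero, h4]
    ext
    · simp only [Prod.smul_fst, smul_eq_mul]; rw [hw1]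
    · simp only [Prod.smul_snd, smul_eq_mul]; field_simp

/-- cross product criterion for non-collinearity -/
theorem cross_ne_of_not_collinear {p q r : ℝ × ℝ}
    (h : ¬ Collinear ℝ ({p, q, r} : Set (ℝ × ℝ))) :
    (q - p).1 * (r - p).2 - (q - p).2 * (r - p).1 ≠ 0 := by
  intro hc
  apply h
  have key : ∃ v : ℝ × ℝ, (∃ t : ℝ, q - p = t • v) ∧ (∃ t : ℝ, r - p = t • v) := by
    by_cases hu0 : q - p = 0
    · exact ⟨r - p, ⟨0, by rw [hu0, zero_smul]⟩, ⟨1, (one_smul _ _).symm⟩⟩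
    · obtain ⟨t, ht⟩ := smul_rep hc hu0
      exact ⟨q - p, ⟨1, (one_smul _ _).symm⟩, ⟨t, ht⟩⟩
  obtain ⟨v, ⟨t1, ht1⟩, ⟨t2, ht2⟩⟩ := key
  rw [collinear_iff_of_mem (Set.mem_insert p {q, r})]
  refine ⟨v, fun z hz => ?_⟩
  rcases hz with rfl | rfl | rfl
  · exact ⟨0, by simp⟩
  · exact ⟨t1, by rw [← ht1]; simp⟩
  · exact ⟨t2, by rw [← ht2]; simp⟩

/-- membership in hull of three points -/
theorem mem_hull3 {p q r x : ℝ × ℝ} {α β γ : ℝ} (hα : 0 ≤ α) (hβ : 0 ≤ β) (hγ : 0 ≤ γ)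
    (hsum : α + β + γ = 1) (hx : x = α • p + β • q + γ • r) :
    x ∈ convexHull ℝ ({p, q, r} : Set (ℝ × ℝ)) := by
  have hmem : ∀ i ∈ (Finset.univ : Finset (Fin 3)),
      (![p, q, r]) i ∈ ({p, q, r} : Set (ℝ × ℝ)) := by
    intro i _
    fin_cases i <;> simp
  have h0 : ∀ i ∈ (Finset.univ : Finset (Fin 3)), 0 ≤ (![α, β, γ]) i := by
    intro i _
    fin_cases i <;> simpa
  have hps : (0:ℝ) < ∑ i, (![α, β, γ]) i := by
    simp [Fin.sum_univ_three, hsum]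
  have := Finset.centerMass_mem_convexHull Finset.univ h0 hps hmem
  have hcm : Finset.univ.centerMass (![α, β, γ]) (![p, q, r]) = x := by
    rw [Finset.centerMass]
    simp [Fin.sum_univ_three, hsum, hx]
  rwa [hcm] at this

open Set

/-- an extreme point of the hull is not in the hull of the rest -/
theorem not_mem_hull_diff_of_extreme {S : Set (ℝ × ℝ)} {x : ℝ × ℝ}
    (hx : x ∈ Set.extremePoints ℝ (convexHull ℝ S)) {T : Set (ℝ × ℝ)}
    (hT : T ⊆ S) (hxT : x ∉ T) : x ∉ convexHull ℝ T := by
  rw [(convex_convexHull ℝ S).mem_extremePoints_iff_mem_diff_convexHull_diff] at hx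
  intro h
  refine hx.2 (convexHull_mono ?_ h)
  intro z hz
  exact ⟨subset_convexHull ℝ S (hT hz), fun h' => hxT (by rwa [Set.mem_singleton_iff.1 h'] at hz)⟩

/-- a point strictly maximizing a linear functional over the rest is extreme in the hull -/
theorem extreme_of_strict {x : ℝ × ℝ} {V : Set (ℝ × ℝ)} (c₁ c₂ : ℝ) (hV : V.Nonempty)
    (h : ∀ y ∈ V, c₁ * y.1 + c₂ * y.2 < c₁ * x.1 + c₂ * x.2) :
    x ∈ Set.extremePoints ℝ (convexHull ℝ (insert x V)) := by
  set f : ℝ × ℝ → ℝ := fun z => c₁ * z.1 + c₂ * z.2 with hf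
  have hlin : IsLinearMap ℝ f := by
    constructor
    · intro a b
      simp only [hf, Prod.fst_add, Prod.snd_add]
      ring
    · intro c a
      simp only [hf, Prod.smul_fst, Prod.smul_snd, smul_eq_mul]
      ring
  have key : ∀ z ∈ convexHull ℝ (insert x V), f z ≤ f x ∧ (f z = f x → z = x) := by
    intro z hz
    rw [convexHull_insert hV, mem_convexJoin] at hz
    obtain ⟨x', hx', w, hw, hzseg⟩ := hz
    rw [Set.mem_singleton_iff.1 hx'] at hzseg
    have hwlt : f w < f x := by
      have hsub : convexHull ℝ V ⊆ {z | f z < f x} :=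
        convexHull_min (fun y hy => h y hy) (convex_halfSpace_lt hlin (f x))
      exact hsub hw
    obtain ⟨u, v, hu, hv, huv, hzw⟩ := hzseg
    have hfz : f z = u * f x + v * f w := by
      rw [← hzw, hlin.map_add, hlin.map_smul, hlin.map_smul]
      simp [smul_eq_mul]
    constructor
    · rw [hfz]
      have hsum2 : u * f x + v * f x = f x := by rw [← add_mul, huv, one_mul]
      nlinarith [mul_le_mul_of_nonneg_left hwlt.le hv]
    · intro hfzm
      have hv0 : v = 0 := by
        by_contra hvne
        have hv' : 0 < v := lt_of_le_of_ne hv (Ne.symm hvne)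
        have hsum2 : u * f x + v * f x = f x := by rw [← add_mul, huv, one_mul]
        nlinarith [mul_lt_mul_of_pos_left hwlt hv']
      have hu1 : u = 1 := by linarith
      rw [← hzw, hv0, hu1]
      simp
  rw [mem_extremePoints_iff_forall_segment]
  refine ⟨subset_convexHull ℝ _ (Set.mem_insert x V), fun x₁ h₁ x₂ h₂ hseg => ?_⟩
  obtain ⟨u, v, hu, hv, huv, hx12⟩ := hseg
  obtain ⟨hle1, heq1⟩ := key x₁ h₁
  obtain ⟨hle2, heq2⟩ := key x₂ h₂
  have hfx : f x = u * f x₁ + v * f x₂ := by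
    rw [← hx12, hlin.map_add, hlin.map_smul, hlin.map_smul]
    simp [smul_eq_mul]
  by_cases hueq : u = 0
  · right
    rw [← hx12, hueq]
    have : v = 1 := by linarith
    simp [this]
  · by_cases hveq : v = 0
    · left
      rw [← hx12, hveq]
      have : u = 1 := by linarith
      simp [this]
    · have hu' : 0 < u := lt_of_le_of_ne hu (Ne.symm hueq)
      have hv' : 0 < v := lt_of_le_of_ne hv (Ne.symm hveq)
      have hf1 : f x₁ = f x := by
        by_contra hne
        have hlt : f x₁ < f x := lt_of_le_of_ne hle1 hne
        have hsum : u * f x + v * f x = f x := by rw [← add_mul, huv, one_mul]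
        nlinarith [mul_lt_mul_of_pos_left hlt hu', mul_le_mul_of_nonneg_left hle2 hv]
      exact Or.inl (heq1 hf1)

/-- affine equivalences map extreme points to extreme points -/
theorem affine_image_extremePoints (f : (ℝ × ℝ) ≃ᵃ[ℝ] (ℝ × ℝ)) (s : Set (ℝ × ℝ)) :
    f '' Set.extremePoints ℝ s = Set.extremePoints ℝ (f '' s) := by
  have himg : ∀ x y : ℝ × ℝ, f '' openSegment ℝ x y = openSegment ℝ (f x) (f y) := by
    intro x y
    have := image_openSegment ℝ f.toAffineMap x y
    simpa using this
  ext b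
  constructor
  · rintro ⟨a, ha, rfl⟩
    refine ⟨Set.mem_image_of_mem f ha.1, ?_⟩
    rintro x₁ ⟨y₁, hy₁, rfl⟩ x₂ ⟨y₂, hy₂, rfl⟩ hseg
    rw [← himg] at hseg
    obtain ⟨z, hz, hzeq⟩ := hseg
    rw [f.injective hzeq] at hz
    have e1 := ha.2 hy₁ hy₂ hz
    exact by rw [e1]
  · rintro ⟨⟨a, ha, rfl⟩, hb⟩
    refine ⟨a, ⟨ha, ?_⟩, rfl⟩
    intro x₁ h₁ x₂ h₂ hseg
    have : f a ∈ openSegment ℝ (f x₁) (f x₂) := by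
      rw [← himg]
      exact Set.mem_image_of_mem f hseg
    have e1 := hb (Set.mem_image_of_mem f h₁) (Set.mem_image_of_mem f h₂) this
    exact f.injective e1



theorem fin4_cases : ∀ (i j k l : Fin 4), i ≠ j → i ≠ k → i ≠ l → j ≠ k → j ≠ l → k ≠ l →
    ∀ m : Fin 4, m = i ∨ m = j ∨ m = k ∨ m = l := by decide

theorem range_eq_four {s : Fin 4 → ℝ × ℝ} {i j k l : Fin 4}
    (hij : i ≠ j) (hik : i ≠ k) (hil : i ≠ l) (hjk : j ≠ k) (hjl : j ≠ l) (hkl : k ≠ l) :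
    Set.range s = {s i, s j, s k, s l} := by
  ext z
  constructor
  · rintro ⟨m, rfl⟩
    rcases fin4_cases i j k l hij hik hil hjk hjl hkl m with rfl | rfl | rfl | rfl <;> simp
  · intro hz
    rcases hz with rfl | rfl | rfl | rfl
    · exact ⟨i, rfl⟩
    · exact ⟨j, rfl⟩
    · exact ⟨k, rfl⟩
    · exact ⟨l, rfl⟩

theorem exists_normal_equiv (s : Fin 4 → ℝ × ℝ) (i j k l : Fin 4)
    (hij : i ≠ j) (hik : i ≠ k) (hil : i ≠ l) (hjk : j ≠ k) (hjl : j ≠ l) (hkl : k ≠ l)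
    (A B : ℝ)
    (hD : (s j - s i).1 * (s k - s i).2 - (s j - s i).2 * (s k - s i).1 ≠ 0)
    (hrel : s l - s i = A • (s j - s i) + B • (s k - s i)) :
    ∃ e : (ℝ × ℝ) ≃ᵃ[ℝ] (ℝ × ℝ),
      e '' convexHull ℝ (Set.range s) = normalForm A B := by
  set u := s j - s i with hu
  set w := s k - s i with hw
  set L := straighten u w hD with hL
  refine ⟨(AffineEquiv.constVAdd ℝ (ℝ × ℝ) (-(s i))).trans L.toAffineEquiv, ?_⟩
  set e := (AffineEquiv.constVAdd ℝ (ℝ × ℝ) (-(s i))).trans L.toAffineEquiv with he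
  have hmap : ∀ z, e z = L (z - s i) := by
    intro z
    simp [he, AffineEquiv.trans_apply, AffineEquiv.constVAdd_apply]
    rw [neg_add_eq_sub]
  have hhull : e '' convexHull ℝ (Set.range s) = convexHull ℝ (e '' Set.range s) := by
    have := e.toAffineMap.image_convexHull (Set.range s)
    simpa using this
  rw [hhull, range_eq_four hij hik hil hjk hjl hkl]
  have h1 : e (s i) = (0, 0) := by
    rw [hmap, sub_self]
    exact map_zero L
  have h2 : e (s j) = (1, 0) := by
    rw [hmap, ← hu, hL]
    exact straighten_fst u w hD
  have h3 : e (s k) = (0, 1) := by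
    rw [hmap, ← hw, hL]
    exact straighten_snd u w hD
  have h4 : e (s l) = (A, B) := by
    rw [hmap, hrel, map_add, map_smul, map_smul, hL, straighten_fst u w hD,
      straighten_snd u w hD]
    ext <;> simp
  have himg : e '' {s i, s j, s k, s l} = {(0, 0), (1, 0), (0, 1), (A, B)} := by
    rw [Set.image_insert_eq, Set.image_insert_eq, Set.image_insert_eq, Set.image_singleton,
      h1, h2, h3, h4]
  rw [himg, normalForm]
  congr 1
  ext z
  simp only [Set.mem_insert_iff, Set.mem_singleton_iff]
  tauto


theorem cramer (u w t : ℝ × ℝ) (hD : u.1 * w.2 - u.2 * w.1 ≠ 0) :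
    t = ((t.1 * w.2 - t.2 * w.1) / (u.1 * w.2 - u.2 * w.1)) • u +
        ((u.1 * t.2 - u.2 * t.1) / (u.1 * w.2 - u.2 * w.1)) • w := by
  ext
  · simp only [Prod.fst_add, Prod.smul_fst, smul_eq_mul]
    field_simp [show w.2 * u.1 - w.1 * u.2 ≠ 0 by contrapose! hD; linarith]
    ring
  · simp only [Prod.snd_add, Prod.smul_snd, smul_eq_mul]
    field_simp [show w.2 * u.1 - w.1 * u.2 ≠ 0 by contrapose! hD; linarith]
    ring

theorem fin4_third : ∀ i j : Fin 4, i ≠ j → ∃ k, k ≠ i ∧ k ≠ j := by decide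

theorem exists_part (s : Fin 4 → ℝ × ℝ)
    (hcol : ∀ i j k : Fin 4, i ≠ j → i ≠ k → j ≠ k →
        ¬ Collinear ℝ ({s i, s j, s k} : Set (ℝ × ℝ)))
    (hext : ∀ i, s i ∈ Set.extremePoints ℝ (convexHull ℝ (Set.range s))) :
    ∃ A B : ℝ, 0 < A ∧ 0 < B ∧ B ≤ 1 ∧ 1 ≤ A ∧ 2 ≤ A + B ∧
      ∃ e : (ℝ × ℝ) ≃ᵃ[ℝ] (ℝ × ℝ),
        e '' convexHull ℝ (Set.range s) = normalForm A B := by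
  have hne : ∀ i j : Fin 4, i ≠ j → s i ≠ s j := by
    intro i j hij heq
    obtain ⟨k, hki, hkj⟩ := fin4_third i j hij
    apply hcol i j k hij hki.symm hkj.symm
    have hset : ({s i, s j, s k} : Set (ℝ × ℝ)) = {s j, s k} := by
      rw [heq]
      exact Set.insert_eq_self.2 (Set.mem_insert _ _)
    rw [hset]
    exact collinear_pair ℝ _ _
  have notmem : ∀ m p q r : Fin 4, p ≠ m → q ≠ m → r ≠ m →
      s m ∉ convexHull ℝ ({s p, s q, s r} : Set (ℝ × ℝ)) := by
    intro m p q r hp hq hr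
    refine not_mem_hull_diff_of_extreme (hext m) ?_ ?_
    · rintro z (rfl | rfl | rfl) <;> exact Set.mem_range_self _
    · rintro (h | h | h)
      · exact hne p m hp h.symm
      · exact hne q m hq h.symm
      · exact hne r m hr h.symm
  have main : ∀ (i j k l : Fin 4), i ≠ j → i ≠ k → i ≠ l → j ≠ k → j ≠ l → k ≠ l →
      ∀ A B : ℝ, 0 < A → 0 < B → 1 < A + B →
      s l = A • (s j - s i) + B • (s k - s i) + s i →
      ∃ A' B' : ℝ, 0 < A' ∧ 0 < B' ∧ B' ≤ 1 ∧ 1 ≤ A' ∧ 2 ≤ A' + B' ∧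
        ∃ e : (ℝ × ℝ) ≃ᵃ[ℝ] (ℝ × ℝ),
          e '' convexHull ℝ (Set.range s) = normalForm A' B' := by
    intro i j k l hij hik hil hjk hjl hkl A B hA hB hAB hl
    have hD : 0 < A + B - 1 := by linarith
    have hD' : A + B - 1 ≠ 0 := ne_of_gt hD
    have hA' : A ≠ 0 := ne_of_gt hA
    have hB' : B ≠ 0 := ne_of_gt hB
    have hcr : ∀ p q r : Fin 4, p ≠ q → p ≠ r → q ≠ r →
        (s q - s p).1 * (s r - s p).2 - (s q - s p).2 * (s r - s p).1 ≠ 0 := by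
      intro p q r h1 h2 h3
      exact cross_ne_of_not_collinear (hcol p q r h1 h2 h3)
    rcases le_total B 1 with hB1 | hB1
    · rcases le_total 1 A with hA1 | hA1
      · rcases le_total (A + B) 2 with hAB2 | hAB2
        · -- case 3 : quad (l,j,k,i), (A/D, B/D)
          refine ⟨A / (A + B - 1), B / (A + B - 1), div_pos hA hD, div_pos hB hD,
            (div_le_one hD).2 (by linarith), (one_le_div hD).2 (by linarith), ?_, ?_⟩
          · rw [← add_div, le_div_iff₀ hD]
            linarith
          · refine exists_normal_equiv s l j k i hjl.symm hkl.symm hil.symm hjk hij.symm hik.symm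
              _ _ (hcr l j k hjl.symm hkl.symm hjk) ?_
            rw [hl]
            match_scalars <;> field_simp <;> ring
        · -- case 1 : identity
          exact ⟨A, B, hA, hB, hB1, hA1, by linarith,
            exists_normal_equiv s i j k l hij hik hil hjk hjl hkl _ _ (hcr i j k hij hik hjk)
              (by rw [hl]; match_scalars <;> ring)⟩
      · rcases le_total B A with hBA | hBA
        · -- case 5 : quad (j,l,i,k), (1/B, D/B)
          refine ⟨1 / B, (A + B - 1) / B, by positivity, div_pos hD hB,
            (div_le_one hB).2 (by linarith), (one_le_div hB).2 (by linarith), ?_, ?_⟩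
          · rw [← add_div, le_div_iff₀ hB]
            linarith
          · refine exists_normal_equiv s j l i k hjl hij.symm hjk hil.symm hkl.symm hik
              _ _ (hcr j l i hjl hij.symm hil.symm) ?_
            rw [hl]
            match_scalars <;> field_simp <;> ring
        · -- case 6 : quad (k,l,i,j), (1/A, D/A)
          refine ⟨1 / A, (A + B - 1) / A, by positivity, div_pos hD hA,
            (div_le_one hA).2 (by linarith), (one_le_div hA).2 (by linarith), ?_, ?_⟩
          · rw [← add_div, le_div_iff₀ hA]
            linarith
          · refine exists_normal_equiv s k l i j hkl hik.symm hjk.symm hil.symm hjl.symm hij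
              _ _ (hcr k l i hkl hik.symm hil.symm) ?_
            rw [hl]
            match_scalars <;> field_simp <;> ring
    · rcases le_total 1 A with hA1 | hA1
      · rcases le_total B A with hBA | hBA
        · -- case 7 : quad (j,i,l,k), (D/B, 1/B)
          refine ⟨(A + B - 1) / B, 1 / B, div_pos hD hB, by positivity,
            (div_le_one hB).2 (by linarith), (one_le_div hB).2 (by linarith), ?_, ?_⟩
          · rw [← add_div, le_div_iff₀ hB]
            linarith
          · refine exists_normal_equiv s j i l k hij.symm hjl hjk hil hik hkl.symm
              _ _ (hcr j i l hij.symm hjl hil) ?_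
            rw [hl]
            match_scalars <;> field_simp <;> ring
        · -- case 8 : quad (k,i,l,j), (D/A, 1/A)
          refine ⟨(A + B - 1) / A, 1 / A, div_pos hD hA, by positivity,
            (div_le_one hA).2 (by linarith), (one_le_div hA).2 (by linarith), ?_, ?_⟩
          · rw [← add_div, le_div_iff₀ hA]
            linarith
          · refine exists_normal_equiv s k i l j hik.symm hkl hjk.symm hil hij hjl.symm
              _ _ (hcr k i l hik.symm hkl hil) ?_
            rw [hl]
            match_scalars <;> field_simp <;> ring
      · rcases le_total (A + B) 2 with hAB2 | hAB2
        · -- case 4 : quad (l,k,j,i), (B/D, A/D)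
          refine ⟨B / (A + B - 1), A / (A + B - 1), div_pos hB hD, div_pos hA hD,
            (div_le_one hD).2 (by linarith), (one_le_div hD).2 (by linarith), ?_, ?_⟩
          · rw [← add_div, le_div_iff₀ hD]
            linarith
          · refine exists_normal_equiv s l k j i hkl.symm hjl.symm hil.symm hjk.symm hik.symm
              hij.symm _ _ (hcr l k j hkl.symm hjl.symm hjk.symm) ?_
            rw [hl]
            match_scalars <;> field_simp <;> ring
        · -- case 2 : swap, (B, A)
          exact ⟨B, A, hB, hA, hA1, hB1, by linarith,
            exists_normal_equiv s i k j l hik hij hil hjk.symm hkl hjl _ _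
              (hcr i k j hik hij hjk.symm)
              (by rw [hl]; match_scalars <;> ring)⟩
  -- base setup
  have h013 : (s 1 - s 0).1 * (s 3 - s 0).2 - (s 1 - s 0).2 * (s 3 - s 0).1 ≠ 0 :=
    cross_ne_of_not_collinear (hcol 0 1 3 (by decide) (by decide) (by decide))
  have h023 : (s 2 - s 0).1 * (s 3 - s 0).2 - (s 2 - s 0).2 * (s 3 - s 0).1 ≠ 0 :=
    cross_ne_of_not_collinear (hcol 0 2 3 (by decide) (by decide) (by decide))
  have h012 : (s 1 - s 0).1 * (s 2 - s 0).2 - (s 1 - s 0).2 * (s 2 - s 0).1 ≠ 0 :=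
    cross_ne_of_not_collinear (hcol 0 1 2 (by decide) (by decide) (by decide))
  have h123 : (s 2 - s 1).1 * (s 3 - s 1).2 - (s 2 - s 1).2 * (s 3 - s 1).1 ≠ 0 :=
    cross_ne_of_not_collinear (hcol 1 2 3 (by decide) (by decide) (by decide))
  obtain ⟨a, hadef⟩ : ∃ x : ℝ, x = ((s 2 - s 0).1 * (s 3 - s 0).2 - (s 2 - s 0).2 * (s 3 - s 0).1)
      / ((s 1 - s 0).1 * (s 3 - s 0).2 - (s 1 - s 0).2 * (s 3 - s 0).1) := ⟨_, rfl⟩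
  obtain ⟨b, hbdef⟩ : ∃ x : ℝ, x = ((s 1 - s 0).1 * (s 2 - s 0).2 - (s 1 - s 0).2 * (s 2 - s 0).1)
      / ((s 1 - s 0).1 * (s 3 - s 0).2 - (s 1 - s 0).2 * (s 3 - s 0).1) := ⟨_, rfl⟩
  have hrel : s 2 = a • (s 1 - s 0) + b • (s 3 - s 0) + s 0 := by
    have h := cramer (s 1 - s 0) (s 3 - s 0) (s 2 - s 0) h013
    rw [← hadef, ← hbdef] at h
    rw [← h]
    abel
  have ha0 : a ≠ 0 := by
    rw [hadef]
    exact div_ne_zero h023 h013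
  have hb0 : b ≠ 0 := by
    rw [hbdef]
    exact div_ne_zero h012 h013
  have haD : a * ((s 1 - s 0).1 * (s 3 - s 0).2 - (s 1 - s 0).2 * (s 3 - s 0).1)
      = ((s 2 - s 0).1 * (s 3 - s 0).2 - (s 2 - s 0).2 * (s 3 - s 0).1) := by
    rw [hadef]
    exact div_mul_cancel₀ _ h013
  have hbD : b * ((s 1 - s 0).1 * (s 3 - s 0).2 - (s 1 - s 0).2 * (s 3 - s 0).1)
      = ((s 1 - s 0).1 * (s 2 - s 0).2 - (s 1 - s 0).2 * (s 2 - s 0).1) := by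
    rw [hbdef]
    exact div_mul_cancel₀ _ h013
  have hab1 : a + b ≠ 1 := by
    intro h
    apply h123
    have hkey : (s 2 - s 1).1 * (s 3 - s 1).2 - (s 2 - s 1).2 * (s 3 - s 1).1 =
        (a + b - 1) * ((s 1 - s 0).1 * (s 3 - s 0).2 - (s 1 - s 0).2 * (s 3 - s 0).1) := by
      have expand : (a + b - 1) * ((s 1 - s 0).1 * (s 3 - s 0).2 - (s 1 - s 0).2 * (s 3 - s 0).1)
          = a * ((s 1 - s 0).1 * (s 3 - s 0).2 - (s 1 - s 0).2 * (s 3 - s 0).1)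
          + b * ((s 1 - s 0).1 * (s 3 - s 0).2 - (s 1 - s 0).2 * (s 3 - s 0).1)
          - ((s 1 - s 0).1 * (s 3 - s 0).2 - (s 1 - s 0).2 * (s 3 - s 0).1) := by ring
      rw [expand, haD, hbD]
      simp only [Prod.fst_sub, Prod.snd_sub]
      ring
    rw [hkey, h]
    ring
  -- exclusions from extremality
  have excl1 : ¬ (a ≤ 0 ∧ b ≤ 0) := by
    rintro ⟨haneg, hbneg⟩
    have hσ : (0:ℝ) < 1 - a - b := by linarith
    have hσ' : (1:ℝ) - a - b ≠ 0 := ne_of_gt hσ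
    refine notmem 0 1 2 3 (by decide) (by decide) (by decide)
      (mem_hull3 (α := -a / (1 - a - b)) (β := 1 / (1 - a - b)) (γ := -b / (1 - a - b))
        (div_nonneg (by linarith) hσ.le) (div_nonneg (by linarith) hσ.le)
        (div_nonneg (by linarith) hσ.le) (by field_simp <;> ring) ?_)
    rw [hrel]
    match_scalars <;> field_simp <;> ring
  have excl2 : ¬ (b ≤ 0 ∧ 1 ≤ a + b) := by
    rintro ⟨hbneg, habge⟩
    have hapos : (0:ℝ) < a := by linarith
    have hane : a ≠ 0 := ne_of_gt hapos
    refine notmem 1 0 2 3 (by decide) (by decide) (by decide)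
      (mem_hull3 (α := (a + b - 1) / a) (β := 1 / a) (γ := -b / a)
        (div_nonneg (by linarith) hapos.le) (div_nonneg (by linarith) hapos.le)
        (div_nonneg (by linarith) hapos.le) (by field_simp <;> ring) ?_)
    rw [hrel]
    match_scalars <;> field_simp <;> ring
  have excl3 : ¬ (a ≤ 0 ∧ 1 ≤ a + b) := by
    rintro ⟨haneg, habge⟩
    have hbpos : (0:ℝ) < b := by linarith
    have hbne : b ≠ 0 := ne_of_gt hbpos
    refine notmem 3 0 1 2 (by decide) (by decide) (by decide)
      (mem_hull3 (α := (a + b - 1) / b) (β := -a / b) (γ := 1 / b)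
        (div_nonneg (by linarith) hbpos.le) (div_nonneg (by linarith) hbpos.le)
        (div_nonneg (by linarith) hbpos.le) (by field_simp <;> ring) ?_)
    rw [hrel]
    match_scalars <;> field_simp <;> ring
  have excl4 : ¬ (0 ≤ a ∧ 0 ≤ b ∧ a + b ≤ 1) := by
    rintro ⟨hage, hbge, hable⟩
    refine notmem 2 0 1 3 (by decide) (by decide) (by decide)
      (mem_hull3 (α := 1 - a - b) (β := a) (γ := b)
        (by linarith) hage hbge (by ring) ?_)
    rw [hrel]
    match_scalars <;> ring
  rcases lt_trichotomy a 0 with haneg | hazero | hapos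
  · have hbpos : 0 < b := by
      rcases lt_trichotomy b 0 with h | h | h
      · exact absurd ⟨haneg.le, h.le⟩ excl1
      · exact absurd h hb0
      · exact h
    have hablt : a + b < 1 := by
      rcases lt_trichotomy (a + b) 1 with h | h | h
      · exact h
      · exact absurd h hab1
      · exact absurd ⟨haneg.le, h.le⟩ excl3
    refine main 0 1 2 3 (by decide) (by decide) (by decide) (by decide) (by decide) (by decide)
      (-a / b) (1 / b) (div_pos (by linarith) hbpos) (by positivity) ?_ ?_
    · rw [← add_div, lt_div_iff₀ hbpos]
      linarith
    · rw [hrel]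
      match_scalars <;> field_simp <;> ring
  · exact absurd hazero ha0
  · rcases lt_trichotomy b 0 with hbneg | hbzero | hbpos
    · have hablt : a + b < 1 := by
        rcases lt_trichotomy (a + b) 1 with h | h | h
        · exact h
        · exact absurd h hab1
        · exact absurd ⟨hbneg.le, h.le⟩ excl2
      refine main 0 2 3 1 (by decide) (by decide) (by decide) (by decide) (by decide) (by decide)
        (1 / a) (-b / a) (by positivity) (div_pos (by linarith) hapos) ?_ ?_
      · rw [← add_div, lt_div_iff₀ hapos]
        linarith
      · rw [hrel]
        match_scalars <;> field_simp <;> ring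
    · exact absurd hbzero hb0
    · have habgt : 1 < a + b := by
        rcases lt_trichotomy (a + b) 1 with h | h | h
        · exact absurd ⟨hapos.le, hbpos.le, h.le⟩ excl4
        · exact absurd h hab1
        · exact h
      exact main 0 1 3 2 (by decide) (by decide) (by decide) (by decide) (by decide) (by decide)
        a b hapos hbpos habgt hrel

theorem extremePoints_nf (a b : ℝ) (ha : 1 ≤ a) (hb : 0 < b) (hb1 : b ≤ 1) (hab : 2 ≤ a + b) :
    Set.extremePoints ℝ (normalForm a b) =
      ({((0:ℝ), (0:ℝ)), (1, 0), (a, b), (0, 1)} : Set (ℝ × ℝ)) := by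
  have ha0 : (0:ℝ) < a := lt_of_lt_of_le zero_lt_one ha
  apply Set.Subset.antisymm
  · exact extremePoints_convexHull_subset
  · intro x hx
    rcases hx with rfl | rfl | rfl | rfl
    · have h := extreme_of_strict (x := ((0:ℝ), (0:ℝ)))
        (V := {((1:ℝ), (0:ℝ)), (a, b), (0, 1)}) (-1) (-1) ⟨(1, 0), by simp⟩ ?_
      · exact h
      · rintro y (rfl | rfl | rfl) <;> simp <;> nlinarith
    · have hset : ({((0:ℝ), (0:ℝ)), (1, 0), (a, b), (0, 1)} : Set (ℝ × ℝ)) =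
          insert ((1:ℝ), (0:ℝ)) {((0:ℝ), (0:ℝ)), (a, b), (0, 1)} := by
        ext z; simp only [Set.mem_insert_iff, Set.mem_singleton_iff]; tauto
      rw [normalForm, hset]
      have h := extreme_of_strict (x := ((1:ℝ), (0:ℝ)))
        (V := {((0:ℝ), (0:ℝ)), (a, b), (0, 1)}) b (-a) ⟨(0, 0), by simp⟩ ?_
      · exact h
      · rintro y (rfl | rfl | rfl) <;> simp <;> nlinarith
    · have hset : ({((0:ℝ), (0:ℝ)), (1, 0), (a, b), (0, 1)} : Set (ℝ × ℝ)) =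
          insert ((a:ℝ), (b:ℝ)) {((0:ℝ), (0:ℝ)), (1, 0), (0, 1)} := by
        ext z; simp only [Set.mem_insert_iff, Set.mem_singleton_iff]; tauto
      rw [normalForm, hset]
      have h := extreme_of_strict (x := ((a:ℝ), (b:ℝ)))
        (V := {((0:ℝ), (0:ℝ)), (1, 0), (0, 1)}) 1 1 ⟨(0, 0), by simp⟩ ?_
      · exact h
      · rintro y (rfl | rfl | rfl) <;> simp <;> nlinarith
    · have hset : ({((0:ℝ), (0:ℝ)), (1, 0), (a, b), (0, 1)} : Set (ℝ × ℝ)) =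
          insert ((0:ℝ), (1:ℝ)) {((0:ℝ), (0:ℝ)), (1, 0), (a, b)} := by
        ext z; simp only [Set.mem_insert_iff, Set.mem_singleton_iff]; tauto
      rw [normalForm, hset]
      have h := extreme_of_strict (x := ((0:ℝ), (1:ℝ)))
        (V := {((0:ℝ), (0:ℝ)), (1, 0), (a, b)}) (-b) a ⟨(0, 0), by simp⟩ ?_
      · exact h
      · rintro y (rfl | rfl | rfl) <;> simp <;> nlinarith

set_option maxHeartbeats 4000000 in

theorem arith_core' (a b c d : ℝ) (X0 X1 X2 X3 : ℝ × ℝ)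
    (ha : 1 ≤ a) (hb : 0 < b) (hb1 : b ≤ 1) (hab : 2 ≤ a + b)
    (hc : 1 ≤ c) (hd : 0 < d) (hd1 : d ≤ 1) (hcd : 2 ≤ c + d)
    (m0 : X0 = (0,0) ∨ X0 = (1,0) ∨ X0 = (0,1) ∨ X0 = (c,d))
    (m1 : X1 = (0,0) ∨ X1 = (1,0) ∨ X1 = (0,1) ∨ X1 = (c,d))
    (m2 : X2 = (0,0) ∨ X2 = (1,0) ∨ X2 = (0,1) ∨ X2 = (c,d))
    (m3 : X3 = (0,0) ∨ X3 = (1,0) ∨ X3 = (0,1) ∨ X3 = (c,d))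
    (d01 : X0 ≠ X1) (d02 : X0 ≠ X2) (d03 : X0 ≠ X3)
    (d12 : X1 ≠ X2) (d13 : X1 ≠ X3) (d23 : X2 ≠ X3)
    (heq : X3 = a • (X1 - X0) + b • (X2 - X0) + X0) :
    a = c ∧ b = d := by
  have ha0 : (0:ℝ) < a := lt_of_lt_of_le zero_lt_one ha
  have hc0 : (0:ℝ) < c := lt_of_lt_of_le zero_lt_one hc
  rcases m0 with rfl|rfl|rfl|rfl <;> rcases m1 with rfl|rfl|rfl|rfl <;>
    rcases m2 with rfl|rfl|rfl|rfl <;> rcases m3 with rfl|rfl|rfl|rfl <;>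
  first
    | exact absurd rfl d01
    | exact absurd rfl d02
    | exact absurd rfl d03
    | exact absurd rfl d12
    | exact absurd rfl d13
    | exact absurd rfl d23
    | (simp only [Prod.mk_sub_mk, Prod.smul_mk, smul_eq_mul, Prod.mk_add_mk,
         Prod.mk.injEq] at heq
       obtain ⟨h1, h2⟩ := heq
       constructor <;>
         nlinarith [h1, h2, mul_pos hb hd, mul_pos hb hc0, mul_pos ha0 hd, mul_pos ha0 hc0,
           mul_nonneg (by linarith : (0:ℝ) ≤ c) (by linarith : (0:ℝ) ≤ a + b - 2),
           mul_nonneg (by linarith : (0:ℝ) ≤ a) (by linarith : (0:ℝ) ≤ c + d - 2),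
           mul_nonneg (by linarith : (0:ℝ) ≤ c + d - 2) (by linarith : (0:ℝ) ≤ a + b - 2),
           mul_nonneg (by linarith : (0:ℝ) ≤ d) (by linarith : (0:ℝ) ≤ a + b - 2),
           mul_nonneg (by linarith : (0:ℝ) ≤ b) (by linarith : (0:ℝ) ≤ c + d - 2),
           mul_nonneg (by linarith : (0:ℝ) ≤ 1 - b) (by linarith : (0:ℝ) ≤ c - 1),
           mul_nonneg (by linarith : (0:ℝ) ≤ 1 - d) (by linarith : (0:ℝ) ≤ a - 1),
           mul_nonneg (by linarith : (0:ℝ) ≤ 1 - b) (by linarith : (0:ℝ) ≤ 1 - d),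
           mul_nonneg hb.le (by linarith : (0:ℝ) ≤ 1 - d),
           mul_nonneg hd.le (by linarith : (0:ℝ) ≤ 1 - b)])

theorem nf_uniq (a b c d : ℝ)
    (ha : 1 ≤ a) (hb : 0 < b) (hb1 : b ≤ 1) (hab : 2 ≤ a + b)
    (hc : 1 ≤ c) (hd : 0 < d) (hd1 : d ≤ 1) (hcd : 2 ≤ c + d)
    (f : (ℝ × ℝ) ≃ᵃ[ℝ] (ℝ × ℝ)) (hf : f '' normalForm a b = normalForm c d) :
    a = c ∧ b = d := by
  have himg : f '' ({((0:ℝ), (0:ℝ)), (1, 0), (a, b), (0, 1)} : Set (ℝ × ℝ)) =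
      ({((0:ℝ), (0:ℝ)), (1, 0), (c, d), (0, 1)} : Set (ℝ × ℝ)) := by
    rw [← extremePoints_nf a b ha hb hb1 hab, affine_image_extremePoints, hf,
      extremePoints_nf c d hc hd hd1 hcd]
  have hmm : ∀ x ∈ ({((0:ℝ), (0:ℝ)), (1, 0), (a, b), (0, 1)} : Set (ℝ × ℝ)),
      f x = (0,0) ∨ f x = (1,0) ∨ f x = (0,1) ∨ f x = (c,d) := by
    intro x hx
    have := himg ▸ Set.mem_image_of_mem f hx
    simp only [Set.mem_insert_iff, Set.mem_singleton_iff] at this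
    tauto
  have m0 := hmm (0,0) (by simp)
  have m1 := hmm (1,0) (by simp)
  have m2 := hmm (0,1) (by simp)
  have m3 := hmm (a,b) (by simp)
  have hinj : ∀ x y : ℝ × ℝ, x ≠ y → f x ≠ f y := fun x y hxy h => hxy (f.injective h)
  have d01 : f ((0:ℝ),(0:ℝ)) ≠ f (1,0) := hinj _ _ (by simp [Prod.ext_iff])
  have d02 : f ((0:ℝ),(0:ℝ)) ≠ f (0,1) := hinj _ _ (by simp [Prod.ext_iff])
  have d03 : f ((0:ℝ),(0:ℝ)) ≠ f (a,b) := hinj _ _ (by simp [Prod.ext_iff]; intro h; linarith)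
  have d12 : f ((1:ℝ),(0:ℝ)) ≠ f (0,1) := hinj _ _ (by simp [Prod.ext_iff])
  have d13 : f ((1:ℝ),(0:ℝ)) ≠ f (a,b) := hinj _ _ (by simp [Prod.ext_iff]; intro h; linarith)
  have d23 : f ((0:ℝ),(1:ℝ)) ≠ f (a,b) := hinj _ _ (by simp [Prod.ext_iff]; intro h; linarith)
  -- affine determination
  have hdec : ∀ z : ℝ × ℝ, f z = f.toAffineMap.linear z + f (0, 0) := by
    intro z
    have h1 : z +ᵥ ((0:ℝ), (0:ℝ)) = z := by simp
    have := f.toAffineMap.map_vadd ((0:ℝ), (0:ℝ)) z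
    rw [h1] at this
    simpa [vadd_eq_add] using this
  have hsplit : ((a, b) : ℝ × ℝ) = a • ((1:ℝ), (0:ℝ)) + b • ((0:ℝ), (1:ℝ)) := by
    ext <;> simp
  have heq : f (a, b) = a • (f (1, 0) - f (0, 0)) + b • (f (0, 1) - f (0, 0)) + f (0, 0) := by
    have e1 : f.toAffineMap.linear (1, 0) = f (1, 0) - f (0, 0) := by
      rw [hdec (1, 0)]; abel
    have e2 : f.toAffineMap.linear (0, 1) = f (0, 1) - f (0, 0) := by
      rw [hdec (0, 1)]; abel
    rw [hdec (a, b)]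
    conv_lhs => rw [hsplit]
    rw [map_add, map_smul, map_smul, e1, e2]
  exact arith_core' a b c d (f (0,0)) (f (1,0)) (f (0,1)) (f (a,b))
    ha hb hb1 hab hc hd hd1 hcd m0 m1 m2 m3 d01 d02 d03 d12 d13 d23 heq

/-- Every convex quadrilateral in ℝ² (convex hull of four points,
no three collinear, each an extreme point) is affinely equivalent to the
normal form `Δ'_{(a,b)}` for a unique pair `(a,b)` with `a > 0`, `b > 0`,
`b ≤ 1 ≤ a` and `a + b ≥ 2`. -/
theorem stmt_6 (s : Fin 4 → ℝ × ℝ)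
    (hcol : ∀ i j k : Fin 4, i ≠ j → i ≠ k → j ≠ k →
        ¬ Collinear ℝ ({s i, s j, s k} : Set (ℝ × ℝ)))
    (hext : ∀ i, s i ∈ Set.extremePoints ℝ (convexHull ℝ (Set.range s))) :
    ∃! p : ℝ × ℝ, 0 < p.1 ∧ 0 < p.2 ∧ p.2 ≤ 1 ∧ 1 ≤ p.1 ∧ 2 ≤ p.1 + p.2 ∧
      ∃ e : (ℝ × ℝ) ≃ᵃ[ℝ] (ℝ × ℝ),
        e '' convexHull ℝ (Set.range s) = normalForm p.1 p.2 := by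
  obtain ⟨A, B, hA, hB, hB1, hA1, hAB, e, he⟩ := exists_part s hcol hext
  refine ⟨(A, B), ⟨hA, hB, hB1, hA1, hAB, e, he⟩, ?_⟩
  rintro ⟨c, d⟩ ⟨hc, hd, hd1, hc1, hcd, f, hf⟩
  have himg2 : e.symm '' normalForm A B = convexHull ℝ (Set.range s) := by
    rw [← he, ← Set.image_comp]
    simp
  have hg : (e.symm.trans f) '' normalForm A B = normalForm c d := by
    rw [AffineEquiv.coe_trans, Set.image_comp, himg2, hf]
  obtain ⟨h1, h2⟩ := nf_uniq A B c d hA1 hB hB1 hAB hc1 hd hd1 hcd (e.symm.trans f) hg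
  exact Prod.ext h1.symm h2.symm
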